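/- Let P be a discrete probability measure supported in S and let y be an N-star transport between P and P₁,…,P_N. Then there exist a finite ordered set 𝒮' of tuples in S × supp(P₁) × ⋯ × supp(P_N) and a vector w ∈ 𝒯(𝒮') such that P = P(w,𝒮') and c(w,𝒮') = c(y). -/
import Mathlib


open MeasureTheory ENNReal

noncomputable section

/-- Euclidean space `ℝ^d`. -/
abbrev Euc (d : ℕ) := EuclideanSpace ℝ (Fin d)

/-- The (topological) support of a measure on `ℝ^d`: the set of points all of whose
neighborhoods have positive measure. -/
def msupp {d : ℕ} (μ : MeasureTheory.Measure (Euc d)) : Set (Euc d) :=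
  {x | ∀ U ∈ nhds x, μ U ≠ 0}

/-- A discrete probability measure: a probability measure with finite support. -/
def IsDiscreteProb {d : ℕ} (μ : MeasureTheory.Measure (Euc d)) : Prop :=
  IsProbabilityMeasure μ ∧ (msupp μ).Finite

/-- Finite second moment. -/
def FinSecondMoment {d : ℕ} (μ : MeasureTheory.Measure (Euc d)) : Prop :=
  ∫⁻ x, (‖x‖₊ : ℝ≥0∞) ^ 2 ∂μ < ⊤

/-- A coupling of `P` and `Q`: a measure on the product whose first marginal is `P`
and second marginal is `Q`. -/
def IsCoupling {d : ℕ} (γ : MeasureTheory.Measure (Euc d × Euc d))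
    (P Q : MeasureTheory.Measure (Euc d)) : Prop :=
  γ.map Prod.fst = P ∧ γ.map Prod.snd = Q

/-- Squared 2-Wasserstein distance: infimum of the quadratic transport cost over couplings. -/
def W2sq {d : ℕ} (P Q : MeasureTheory.Measure (Euc d)) : ℝ≥0∞ :=
  ⨅ γ ∈ {γ | IsCoupling γ P Q}, ∫⁻ p, (‖p.1 - p.2‖₊ : ℝ≥0∞) ^ 2 ∂γ

/-- A barycenter of `P 0, …, P (N-1)`: a probability measure with finite second moment
minimizing the sum of squared Wasserstein distances over all such measures. -/
def IsBarycenter {d N : ℕ} (P : Fin N → MeasureTheory.Measure (Euc d))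
    (Pbar : MeasureTheory.Measure (Euc d)) : Prop :=
  IsProbabilityMeasure Pbar ∧ FinSecondMoment Pbar ∧
    ∀ Q : MeasureTheory.Measure (Euc d), IsProbabilityMeasure Q → FinSecondMoment Q →
      ∑ i, W2sq Pbar (P i) ≤ ∑ i, W2sq Q (P i)

/-- A multi-coupling of `P 0, …, P (N-1)`: a probability measure on `(ℝ^d)^N` whose
`i`-th coordinate marginal is `P i`. -/
def IsMultiCoupling {d N : ℕ} (π : MeasureTheory.Measure (Fin N → Euc d))
    (P : Fin N → MeasureTheory.Measure (Euc d)) : Prop :=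
  IsProbabilityMeasure π ∧ ∀ i, π.map (fun x => x i) = P i

/-- The averaging map `(x₁, …, x_N) ↦ (x₁ + ⋯ + x_N)/N`. -/
def avgMap (d N : ℕ) : (Fin N → Euc d) → Euc d := fun x => (N : ℝ)⁻¹ • ∑ i, x i

/-- The set `S` of all centroids of support points, one from each measure. -/
def centroidSet {d N : ℕ} (P : Fin N → MeasureTheory.Measure (Euc d)) : Set (Euc d) :=
  {s | ∃ x : Fin N → Euc d, (∀ i, x i ∈ msupp (P i)) ∧ s = (N : ℝ)⁻¹ • ∑ i, x i}

open scoped Classical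

/-- The location-fixed transportation scheme `𝒯(𝒮)` for the ordered tuple family
`s_h = (q0 h, q h 1, …, q h N)`: nonnegative weights `w` such that for each `i` and each
support point `k` of `Pᵢ`, the total weight of tuples whose `i`-th entry is `k` equals the
mass `Pᵢ({k})`. -/
def schemeT {d N m : ℕ} (P : Fin N → MeasureTheory.Measure (Euc d))
    (suppF : Fin N → Finset (Euc d))
    (q0 : Fin m → Euc d) (q : Fin m → Fin N → Euc d) : Set (Fin m → ℝ) :=
  {w | (∀ h, 0 ≤ w h) ∧
    ∀ i, ∀ k ∈ suppF i,
      ∑ h ∈ Finset.univ.filter (fun h => q h i = k), w h = (P i {k}).toReal}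

/-- The measure `P(w, 𝒮) = Σ_h w_h δ_{q_{h0}}` associated with a weight vector `w`. -/
def schemeMeasure {d m : ℕ} (q0 : Fin m → Euc d) (w : Fin m → ℝ) :
    MeasureTheory.Measure (Euc d) :=
  ∑ h, ENNReal.ofReal (w h) • MeasureTheory.Measure.dirac (q0 h)

/-- The cost `c(w, 𝒮) = Σ_h w_h Σᵢ ‖q_{h0} - q_{hi}‖²`. -/
def schemeCost {d N m : ℕ} (q0 : Fin m → Euc d) (q : Fin m → Fin N → Euc d)
    (w : Fin m → ℝ) : ℝ :=
  ∑ h, w h * ∑ i, ‖q0 h - q h i‖ ^ 2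

/-- An `N`-star transport between a measure `Q` (supported in the finite set `JF`, with mass
`Q({j})` at `j`) and `P₁, …, P_N`: nonnegative `y i j k` with row sums `Σ_k y i j k = Q({j})`
and column sums `Σ_j y i j k = Pᵢ({k})`. -/
def IsNStar {d N : ℕ} (P : Fin N → MeasureTheory.Measure (Euc d))
    (suppF : Fin N → Finset (Euc d)) (Q : MeasureTheory.Measure (Euc d))
    (JF : Finset (Euc d)) (y : Fin N → Euc d → Euc d → ℝ) : Prop :=
  (∀ i j k, 0 ≤ y i j k) ∧
  (∀ i, ∀ j ∈ JF, ∑ k ∈ suppF i, y i j k = (Q {j}).toReal) ∧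
  (∀ i, ∀ k ∈ suppF i, ∑ j ∈ JF, y i j k = (P i {k}).toReal)

/-- The cost `c(y) = Σ_{i,j,k} ‖x_j - x_{ik}‖² y_{ijk}` of an `N`-star transport. -/
def nstarCost {d N : ℕ} (JF : Finset (Euc d)) (suppF : Fin N → Finset (Euc d))
    (y : Fin N → Euc d → Euc d → ℝ) : ℝ :=
  ∑ i, ∑ j ∈ JF, ∑ k ∈ suppF i, ‖j - k‖ ^ 2 * y i j k


/-- A measure vanishes outside its (topological) support. -/
lemma msupp_compl_null {d : ℕ} (μ : MeasureTheory.Measure (Euc d)) :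
    μ (msupp μ)ᶜ = 0 := by
  apply MeasureTheory.measure_null_of_locally_null
  intro x hx
  simp only [msupp, Set.mem_compl_iff, Set.mem_setOf_eq, not_forall] at hx
  obtain ⟨U, hU, hU0⟩ := hx
  exact ⟨U, nhdsWithin_le_nhds hU, by simpa using hU0⟩

/-- A measure with finite support is a finite combination of Dirac measures. -/
lemma measure_eq_sum_dirac {d : ℕ} (μ : MeasureTheory.Measure (Euc d))
    (F : Finset (Euc d)) (hF : ↑F = msupp μ) :
    μ = ∑ j ∈ F, μ {j} • MeasureTheory.Measure.dirac j := by
  classical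
  ext s hs
  have hsum : (∑ j ∈ F, μ {j} • MeasureTheory.Measure.dirac j) s
      = ∑ j ∈ F, μ {j} * (MeasureTheory.Measure.dirac j) s := by
    rw [MeasureTheory.Measure.finset_sum_apply]
    simp [MeasureTheory.Measure.smul_apply, smul_eq_mul]
  rw [hsum]
  have hterm : ∀ j ∈ F, μ {j} * (MeasureTheory.Measure.dirac j) s
      = if j ∈ s then μ {j} else 0 := by
    intro j _
    rw [MeasureTheory.Measure.dirac_apply' _ hs, Set.indicator_apply]
    by_cases hj : j ∈ s <;> simp [hj]
  rw [Finset.sum_congr rfl hterm, ← Finset.sum_filter]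
  have hfin : ∑ j ∈ F.filter (· ∈ s), μ {j} = μ ↑(F.filter (· ∈ s)) := by
    rw [show (↑(F.filter (· ∈ s)) : Set (Euc d)) = ⋃ b ∈ F.filter (· ∈ s), {b} by
      ext x; simp]
    rw [MeasureTheory.measure_biUnion_finset]
    · intro a _ b _ hab
      simp [Function.onFun, Set.disjoint_singleton, hab]
    · intro b _; exact measurableSet_singleton b
  rw [hfin]
  have hset : (↑(F.filter (· ∈ s)) : Set (Euc d)) = s ∩ ↑F := by
    ext x; simp [and_comm]
  rw [hset]
  apply le_antisymm
  · calc μ s ≤ μ (s ∩ ↑F) + μ (s \ ↑F) := MeasureTheory.measure_le_inter_add_diff μ s ↑F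
      _ = μ (s ∩ ↑F) := by
        have hnull : μ (s \ ↑F) = 0 :=
          MeasureTheory.measure_mono_null (by rw [← hF]; exact fun x hx => hx.2)
            (msupp_compl_null μ)
        rw [hnull, add_zero]
  · exact MeasureTheory.measure_mono Set.inter_subset_left

/-- Summing a product over a product of finsets, with one coordinate weighted by `g`. -/
lemma prod_sum_pick {N : ℕ} {α : Type*} [DecidableEq α] (S : Fin N → Finset α)
    (f : Fin N → α → ℝ) (i₀ : Fin N) (g : α → ℝ) :
    ∑ v ∈ Fintype.piFinset S, (∏ i, f i (v i)) * g (v i₀)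
      = (∑ k ∈ S i₀, f i₀ k * g k) * ∏ i ∈ Finset.univ.erase i₀, ∑ k ∈ S i, f i k := by
  classical
  set F : Fin N → α → ℝ := fun i k => if i = i₀ then f i k * g k else f i k with hF
  have key : ∀ v : Fin N → α, (∏ i, F i (v i)) = (∏ i, f i (v i)) * g (v i₀) := by
    intro v
    rw [← Finset.mul_prod_erase Finset.univ (fun i => F i (v i)) (Finset.mem_univ i₀),
        ← Finset.mul_prod_erase Finset.univ (fun i => f i (v i)) (Finset.mem_univ i₀)]
    have he : ∀ i ∈ Finset.univ.erase i₀, F i (v i) = f i (v i) := by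
      intro i hi
      simp [hF, Finset.ne_of_mem_erase hi]
    rw [Finset.prod_congr rfl he]
    simp only [hF, if_pos rfl]
    ring
  calc ∑ v ∈ Fintype.piFinset S, (∏ i, f i (v i)) * g (v i₀)
      = ∑ v ∈ Fintype.piFinset S, ∏ i, F i (v i) :=
        Finset.sum_congr rfl fun v _ => (key v).symm
    _ = ∏ i, ∑ k ∈ S i, F i k := (Finset.prod_univ_sum S F).symm
    _ = (∑ k ∈ S i₀, f i₀ k * g k) * ∏ i ∈ Finset.univ.erase i₀, ∑ k ∈ S i, f i k := by
        rw [← Finset.mul_prod_erase Finset.univ _ (Finset.mem_univ i₀)]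
        congr 1
        · simp [hF]
        · refine Finset.prod_congr rfl fun i hi => Finset.sum_congr rfl fun k _ => ?_
          simp [hF, Finset.ne_of_mem_erase hi]

/-- for every discrete probability measure `Q` supported in `S` and every
`N`-star transport `y` between `Q` and `P₁, …, P_N`, there exist an ordered finite family
`𝒮'` of tuples in `S × supp(P₁) × ⋯ × supp(P_N)` and a weight vector `w ∈ 𝒯(𝒮')` such that
`Q = P(w, 𝒮')` and `c(w, 𝒮') = c(y)`. -/
theorem stmt11 {d N : ℕ} (P : Fin N → MeasureTheory.Measure (Euc d))
    (hP : ∀ i, IsDiscreteProb (P i))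
    (suppF : Fin N → Finset (Euc d)) (hsuppF : ∀ i, ↑(suppF i) = msupp (P i))
    (Q : MeasureTheory.Measure (Euc d)) (hQ : IsDiscreteProb Q)
    (hQS : msupp Q ⊆ centroidSet P)
    (QF : Finset (Euc d)) (hQF : ↑QF = msupp Q)
    (y : Fin N → Euc d → Euc d → ℝ) (hy : IsNStar P suppF Q QF y) :
    ∃ (m : ℕ) (q0 : Fin m → Euc d) (q : Fin m → Fin N → Euc d),
      (∀ h, q0 h ∈ centroidSet P) ∧ (∀ h i, q h i ∈ msupp (P i)) ∧
      ∃ w ∈ schemeT P suppF q0 q,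
        schemeMeasure q0 w = Q ∧ schemeCost q0 q w = nstarCost QF suppF y := by
  classical
  obtain ⟨hy0, hyrow, hycol⟩ := hy
  haveI : IsProbabilityMeasure Q := hQ.1
  set A : Finset (Euc d × (Fin N → Euc d)) := QF ×ˢ Fintype.piFinset suppF with hA
  set W : Euc d × (Fin N → Euc d) → ℝ := fun a =>
    if (Q {a.1}).toReal = 0 then 0
    else (Q {a.1}).toReal * ∏ i, (y i a.1 (a.2 i) / (Q {a.1}).toReal) with hWdef
  -- nonnegativity of W
  have hW0 : ∀ a, 0 ≤ W a := by
    intro a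
    simp only [hWdef]
    split_ifs with h
    · exact le_refl 0
    · have h1 : (0 : ℝ) ≤ (Q {a.1}).toReal := ENNReal.toReal_nonneg
      exact mul_nonneg h1 (Finset.prod_nonneg fun i _ =>
        div_nonneg (hy0 i a.1 (a.2 i)) h1)
  -- key sum identity S2
  have hS2 : ∀ j ∈ QF, ∀ (i₀ : Fin N) (g : Euc d → ℝ),
      ∑ v ∈ Fintype.piFinset suppF, W (j, v) * g (v i₀)
        = ∑ k ∈ suppF i₀, y i₀ j k * g k := by
    intro j hj i₀ g
    by_cases hdj : (Q {j}).toReal = 0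
    · have hzero : ∀ k ∈ suppF i₀, y i₀ j k = 0 := by
        have hr := hyrow i₀ j hj
        rw [hdj] at hr
        exact fun k hk =>
          (Finset.sum_eq_zero_iff_of_nonneg (fun k _ => hy0 i₀ j k)).mp hr k hk
      have hL : ∀ v ∈ Fintype.piFinset suppF, W (j, v) * g (v i₀) = 0 := by
        intro v _
        simp [hWdef, hdj]
      rw [Finset.sum_congr rfl hL, Finset.sum_const_zero]
      exact (Finset.sum_eq_zero fun k hk => by rw [hzero k hk, zero_mul]).symm
    · have hrow : ∀ i, ∑ k ∈ suppF i, y i j k = (Q {j}).toReal := fun i => hyrow i j hj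
      have step : ∀ v ∈ Fintype.piFinset suppF, W (j, v) * g (v i₀)
          = (Q {j}).toReal * ((∏ i, (y i j (v i) / (Q {j}).toReal)) * g (v i₀)) := by
        intro v _
        simp only [hWdef, if_neg hdj]
        ring
      rw [Finset.sum_congr rfl step, ← Finset.mul_sum,
        prod_sum_pick suppF (fun i k => y i j k / (Q {j}).toReal) i₀ g]
      have h1 : ∀ i, ∑ k ∈ suppF i, y i j k / (Q {j}).toReal = 1 := by
        intro i
        rw [← Finset.sum_div, hrow i, div_self hdj]
      rw [Finset.prod_eq_one fun i _ => h1 i, mul_one, Finset.mul_sum]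
      refine Finset.sum_congr rfl fun k _ => ?_
      field_simp
  -- key sum identity S1
  have hS1 : ∀ j ∈ QF, ∑ v ∈ Fintype.piFinset suppF, W (j, v) = (Q {j}).toReal := by
    intro j hj
    by_cases hdj : (Q {j}).toReal = 0
    · rw [hdj]
      exact Finset.sum_eq_zero fun v _ => by simp [hWdef, hdj]
    · have h1 : ∀ i, ∑ k ∈ suppF i, y i j k / (Q {j}).toReal = 1 := by
        intro i
        rw [← Finset.sum_div, hyrow i j hj, div_self hdj]
      have hL : ∀ v ∈ Fintype.piFinset suppF,
          W (j, v) = (Q {j}).toReal * ∏ i, (y i j (v i) / (Q {j}).toReal) := by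
        intro v _
        simp only [hWdef, if_neg hdj]
      rw [Finset.sum_congr rfl hL, ← Finset.mul_sum]
      have hps : ∑ v ∈ Fintype.piFinset suppF, ∏ i, (y i j (v i) / (Q {j}).toReal)
          = ∏ i, ∑ k ∈ suppF i, (y i j k / (Q {j}).toReal) :=
        (Finset.prod_univ_sum suppF fun i k => y i j k / (Q {j}).toReal).symm
      rw [hps, Finset.prod_eq_one fun i _ => h1 i, mul_one]
  set e := A.equivFin with he
  set q0 : Fin A.card → Euc d := fun h => (e.symm h).1.1 with hq0
  set q : Fin A.card → Fin N → Euc d := fun h i => (e.symm h).1.2 i with hq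
  set w : Fin A.card → ℝ := fun h => W (e.symm h).1 with hwdef
  have hmem : ∀ h : Fin A.card,
      (e.symm h).1.1 ∈ QF ∧ ∀ i, (e.symm h).1.2 i ∈ suppF i := by
    intro h
    have hm : (e.symm h : Euc d × (Fin N → Euc d)) ∈ QF ×ˢ Fintype.piFinset suppF :=
      (e.symm h).2
    rw [Finset.mem_product] at hm
    exact ⟨hm.1, fun i => Fintype.mem_piFinset.mp hm.2 i⟩
  -- reindexing lemma
  have hre : ∀ {M : Type} [AddCommMonoid M] (f : Euc d × (Fin N → Euc d) → M),
      ∑ h : Fin A.card, f (e.symm h).1 = ∑ a ∈ A, f a := by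
    intro M _ f
    rw [← Finset.sum_coe_sort A f]
    exact Equiv.sum_comp e.symm (fun a : ↥A => f a.1)
  refine ⟨A.card, q0, q, ?_, ?_, w, ⟨fun h => hW0 _, ?_⟩, ?_, ?_⟩
  · intro h
    apply hQS
    rw [← hQF]
    exact_mod_cast (hmem h).1
  · intro h i
    rw [← hsuppF i]
    exact_mod_cast (hmem h).2 i
  · -- scheme constraints
    intro i k hk
    have : ∑ h ∈ Finset.univ.filter (fun h => q h i = k), w h
        = ∑ a ∈ A, (if a.2 i = k then W a else 0) := by
      rw [Finset.sum_filter]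
      exact hre (fun a => if a.2 i = k then W a else 0)
    rw [this, hA, Finset.sum_product]
    have hinner : ∀ j ∈ QF,
        ∑ v ∈ Fintype.piFinset suppF, (if v i = k then W (j, v) else 0) = y i j k := by
      intro j hj
      have hg : ∀ v ∈ Fintype.piFinset suppF,
          (if v i = k then W (j, v) else 0)
            = W (j, v) * (if v i = k then (1:ℝ) else 0) := by
        intro v _
        split_ifs <;> simp
      rw [Finset.sum_congr rfl hg, hS2 j hj i (fun k' => if k' = k then (1:ℝ) else 0)]
      rw [Finset.sum_congr rfl (fun k' _ => by
        split_ifs with hkk <;> simp [hkk] : ∀ k' ∈ suppF i,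
          y i j k' * (if k' = k then (1:ℝ) else 0) = if k' = k then y i j k' else 0)]
      rw [Finset.sum_ite_eq' (suppF i) k (fun k' => y i j k'), if_pos hk]
    rw [Finset.sum_congr rfl hinner]
    exact hycol i k hk
  · -- measure identity
    rw [schemeMeasure]
    have h1 : ∑ h : Fin A.card, ENNReal.ofReal (w h) • MeasureTheory.Measure.dirac (q0 h)
        = ∑ a ∈ A, ENNReal.ofReal (W a) • MeasureTheory.Measure.dirac a.1 :=
      hre (fun a => ENNReal.ofReal (W a) • MeasureTheory.Measure.dirac a.1)
    rw [h1, hA, Finset.sum_product]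
    have h2 : ∀ j ∈ QF,
        ∑ v ∈ Fintype.piFinset suppF,
            ENNReal.ofReal (W (j, v)) • MeasureTheory.Measure.dirac j
          = Q {j} • MeasureTheory.Measure.dirac j := by
      intro j hj
      rw [← Finset.sum_smul, ← ENNReal.ofReal_sum_of_nonneg (fun v _ => hW0 (j, v)),
        hS1 j hj, ENNReal.ofReal_toReal (MeasureTheory.measure_ne_top Q _)]
    rw [Finset.sum_congr rfl h2]
    exact (measure_eq_sum_dirac Q QF hQF).symm
  · -- cost identity
    rw [schemeCost, nstarCost]
    have h1 : ∑ h : Fin A.card, w h * ∑ i, ‖q0 h - q h i‖ ^ 2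
        = ∑ a ∈ A, W a * ∑ i, ‖a.1 - a.2 i‖ ^ 2 :=
      hre (fun a => W a * ∑ i, ‖a.1 - a.2 i‖ ^ 2)
    rw [h1, hA, Finset.sum_product]
    have h2 : ∀ j ∈ QF,
        ∑ v ∈ Fintype.piFinset suppF, W (j, v) * ∑ i, ‖j - v i‖ ^ 2
          = ∑ i, ∑ k ∈ suppF i, ‖j - k‖ ^ 2 * y i j k := by
      intro j hj
      have : ∀ v ∈ Fintype.piFinset suppF,
          W (j, v) * ∑ i, ‖j - v i‖ ^ 2 = ∑ i, W (j, v) * ‖j - v i‖ ^ 2 :=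
        fun v _ => Finset.mul_sum _ _ _
      rw [Finset.sum_congr rfl this, Finset.sum_comm]
      refine Finset.sum_congr rfl fun i _ => ?_
      rw [hS2 j hj i (fun k => ‖j - k‖ ^ 2)]
      exact Finset.sum_congr rfl fun k _ => mul_comm _ _
    rw [Finset.sum_congr rfl h2, Finset.sum_comm]
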